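/- For probability mass functions q and r on a finite set, L₁(q,r) ≤ √(2 ln(b) · D(q||r)), where b is the base of the logarithm used in D (Pinsker-type inequality). -/

import Mathlib

open Real Finset

/-- `(x+1) log x - 2(x-1)` has nonnegative derivative on `(0,∞)`. -/
private lemma g_hasDeriv {x : ℝ} (hx : 0 < x) :
    HasDerivAt (fun t : ℝ => (t + 1) * Real.log t - 2 * (t - 1))
      (Real.log x + (x + 1) * x⁻¹ - 2) x := by
  have h1 : HasDerivAt (fun t : ℝ => (t + 1) * Real.log t)
      (1 * Real.log x + (x + 1) * x⁻¹) x :=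
    ((hasDerivAt_id x).add_const 1).mul (Real.hasDerivAt_log hx.ne')
  have h2 : HasDerivAt (fun t : ℝ => 2 * (t - 1)) 2 x := by
    simpa using ((hasDerivAt_id x).sub_const 1).const_mul 2
  have := h1.sub h2
  simp only [one_mul] at this
  exact this

private lemma g_sign_ge {x : ℝ} (hx : 1 ≤ x) :
    0 ≤ (x + 1) * Real.log x - 2 * (x - 1) := by
  have hmono : MonotoneOn (fun t : ℝ => (t + 1) * Real.log t - 2 * (t - 1)) (Set.Ici 1) := by
    refine monotoneOn_of_deriv_nonneg (convex_Ici 1) ?_ ?_ ?_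
    · exact fun t ht => ((g_hasDeriv (by simp at ht; linarith)).continuousAt).continuousWithinAt
    · intro t ht
      simp only [interior_Ici, Set.mem_Ioi] at ht
      exact ((g_hasDeriv (by linarith)).differentiableAt).differentiableWithinAt
    · intro t ht
      simp only [interior_Ici, Set.mem_Ioi] at ht
      have ht0 : (0:ℝ) < t := by linarith
      rw [(g_hasDeriv ht0).deriv]
      have hl := Real.one_sub_inv_le_log_of_pos ht0
      have : (x + 1) * x⁻¹ = x * x⁻¹ + x⁻¹ := by ring
      have hti : t * t⁻¹ = 1 := mul_inv_cancel₀ ht0.ne'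
      nlinarith [hl, hti]
  have h0 : (fun t : ℝ => (t + 1) * Real.log t - 2 * (t - 1)) 1 = 0 := by simp
  have := hmono (Set.mem_Ici.mpr le_rfl) (Set.mem_Ici.mpr hx) hx
  simpa [h0] using this

private lemma g_sign_le {x : ℝ} (hx0 : 0 < x) (hx : x ≤ 1) :
    (x + 1) * Real.log x - 2 * (x - 1) ≤ 0 := by
  have hmono : MonotoneOn (fun t : ℝ => (t + 1) * Real.log t - 2 * (t - 1)) (Set.Ioi 0) := by
    refine monotoneOn_of_deriv_nonneg (convex_Ioi 0) ?_ ?_ ?_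
    · exact fun t ht => ((g_hasDeriv (by exact ht)).continuousAt).continuousWithinAt
    · intro t ht
      simp only [interior_Ioi, Set.mem_Ioi] at ht
      exact ((g_hasDeriv ht).differentiableAt).differentiableWithinAt
    · intro t ht
      simp only [interior_Ioi, Set.mem_Ioi] at ht
      rw [(g_hasDeriv ht).deriv]
      have hl := Real.one_sub_inv_le_log_of_pos ht
      have hti : t * t⁻¹ = 1 := mul_inv_cancel₀ ht.ne'
      nlinarith [hl, hti]
  have h0 : (fun t : ℝ => (t + 1) * Real.log t - 2 * (t - 1)) 1 = 0 := by simp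
  have := hmono (Set.mem_Ioi.mpr hx0) (Set.mem_Ioi.mpr one_pos) hx
  simpa [h0] using this

private lemma f_hasDeriv {x : ℝ} (hx : 0 < x) :
    HasDerivAt (fun t : ℝ => (2 * t + 4) * (t * Real.log t - t + 1) - 3 * (t - 1) ^ 2)
      (4 * ((x + 1) * Real.log x - 2 * (x - 1))) x := by
  have hll : HasDerivAt (fun t : ℝ => t * Real.log t) (Real.log x + 1) x := by
    have := (hasDerivAt_id x).mul (Real.hasDerivAt_log hx.ne')
    exact this.congr_deriv (by rw [one_mul, id_eq, mul_inv_cancel₀ hx.ne'])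
  have h1 : HasDerivAt (fun t : ℝ => t * Real.log t - t + 1) (Real.log x + 1 - 1) x :=
    (hll.sub (hasDerivAt_id x)).add_const 1
  have h2 : HasDerivAt (fun t : ℝ => 2 * t + 4) 2 x := by
    simpa using ((hasDerivAt_id x).const_mul 2).add_const 4
  have h3 : HasDerivAt (fun t : ℝ => (2 * t + 4) * (t * Real.log t - t + 1))
      (2 * (x * Real.log x - x + 1) + (2 * x + 4) * (Real.log x + 1 - 1)) x := h2.mul h1
  have h4 : HasDerivAt (fun t : ℝ => 3 * (t - 1) ^ 2) (3 * (2 * (x - 1))) x := by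
    simpa using (((hasDerivAt_id x).sub_const 1).pow 2).const_mul 3
  have := h3.sub h4
  exact this.congr_deriv (by ring)

/-- Key pointwise inequality: `3(x-1)² ≤ (2x+4)(x log x - x + 1)` for `x ≥ 0`. -/
private lemma key_ineq {x : ℝ} (hx : 0 ≤ x) :
    3 * (x - 1) ^ 2 ≤ (2 * x + 4) * (x * Real.log x - x + 1) := by
  rcases eq_or_lt_of_le hx with h | hx0
  · simp [← h]; norm_num
  set f : ℝ → ℝ := fun t => (2 * t + 4) * (t * Real.log t - t + 1) - 3 * (t - 1) ^ 2 with hf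
  suffices h : 0 ≤ f x by simp only [hf] at h; linarith
  have hf1 : f 1 = 0 := by simp [hf]
  rcases le_or_gt 1 x with h1 | h1
  · have hmono : MonotoneOn f (Set.Ici 1) := by
      refine monotoneOn_of_deriv_nonneg (convex_Ici 1) ?_ ?_ ?_
      · exact fun t ht => ((f_hasDeriv (by simp at ht; linarith)).continuousAt).continuousWithinAt
      · intro t ht
        simp only [interior_Ici, Set.mem_Ioi] at ht
        exact ((f_hasDeriv (by linarith)).differentiableAt).differentiableWithinAt
      · intro t ht
        simp only [interior_Ici, Set.mem_Ioi] at ht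
        rw [(f_hasDeriv (by linarith : (0:ℝ) < t)).deriv]
        have := g_sign_ge (le_of_lt ht)
        linarith
    have := hmono (Set.mem_Ici.mpr le_rfl) (Set.mem_Ici.mpr h1) h1
    rw [hf1] at this; exact this
  · have hanti : AntitoneOn f (Set.Ioc 0 1) := by
      refine antitoneOn_of_deriv_nonpos (convex_Ioc 0 1) ?_ ?_ ?_
      · exact fun t ht => ((f_hasDeriv ht.1).continuousAt).continuousWithinAt
      · intro t ht
        rw [interior_Ioc] at ht
        exact ((f_hasDeriv ht.1).differentiableAt).differentiableWithinAt
      · intro t ht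
        rw [interior_Ioc] at ht
        rw [(f_hasDeriv ht.1).deriv]
        have := g_sign_le ht.1 (le_of_lt ht.2)
        linarith
    have := hanti (Set.mem_Ioc.mpr ⟨hx0, le_of_lt h1⟩)
      (Set.mem_Ioc.mpr ⟨one_pos, le_rfl⟩) (le_of_lt h1)
    rw [hf1] at this; exact this

/-- Pinsker-type inequality: `L₁(q,r) ≤ √(2 ln b · D(q‖r))`, where `D` is the KL
divergence in base `b` (absolute continuity encodes the `q log(q/0) = ∞` convention,
under which the claim is trivial). -/
theorem l1_le_sqrt_kl {Y : Type*} [Fintype Y] (b : ℝ) (hb : 1 < b)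
    (q r : Y → ℝ) (hq0 : ∀ y, 0 ≤ q y) (hr0 : ∀ y, 0 ≤ r y)
    (hq1 : ∑ y, q y = 1) (hr1 : ∑ y, r y = 1)
    (hac : ∀ y, r y = 0 → q y = 0) :
    ∑ y, |q y - r y| ≤
      Real.sqrt (2 * Real.log b * ∑ y, q y * Real.logb b (q y / r y)) := by
  have hlb : 0 < Real.log b := Real.log_pos hb
  set D : ℝ := ∑ y, q y * Real.log (q y / r y) with hD
  -- rewrite RHS in terms of natural-log divergence
  have hRHS : 2 * Real.log b * ∑ y, q y * Real.logb b (q y / r y) = 2 * D := by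
    have : ∀ y : Y, q y * Real.logb b (q y / r y)
        = (q y * Real.log (q y / r y)) / Real.log b := by
      intro y; rw [Real.logb]; ring
    rw [Finset.sum_congr rfl (fun y _ => this y), ← Finset.sum_div]
    field_simp
    ring
  rw [hRHS]
  -- per-point quantities
  set a : Y → ℝ := fun y => q y * Real.log (q y / r y) - q y + r y with ha
  have ha0 : ∀ y, 0 ≤ a y := by
    intro y
    rcases eq_or_lt_of_le (hr0 y) with h | hr
    · have hq := hac y h.symm
      simp [ha, hq, ← h]
    rcases eq_or_lt_of_le (hq0 y) with h | hq
    · simp [ha, ← h]; linarith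
    · have hx : 0 < q y / r y := div_pos hq hr
      have := Real.one_sub_inv_le_log_of_pos hx
      have hinv : (q y / r y)⁻¹ = r y / q y := by
        rw [inv_div]
      rw [hinv] at this
      have h2 : q y * (1 - r y / q y) ≤ q y * Real.log (q y / r y) :=
        mul_le_mul_of_nonneg_left this (le_of_lt hq)
      have h3 : q y * (1 - r y / q y) = q y - r y := by field_simp
      simp only [ha]; linarith [h3 ▸ h2]
  have hkey : ∀ y, 3 * (q y - r y) ^ 2 ≤ (2 * q y + 4 * r y) * a y := by
    intro y
    rcases eq_or_lt_of_le (hr0 y) with h | hr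
    · have hq := hac y h.symm
      simp [ha, hq, ← h]
    · set x : ℝ := q y / r y with hx
      have hxnn : 0 ≤ x := div_nonneg (hq0 y) (hr0 y)
      have hk := key_ineq hxnn
      have hqx : q y = r y * x := by rw [hx]; field_simp
      have haxx : a y = r y * (x * Real.log x - x + 1) := by
        simp only [ha, ← hx]
        rw [hqx]; ring
      rw [haxx, hqx]
      calc 3 * (r y * x - r y) ^ 2 = r y ^ 2 * (3 * (x - 1) ^ 2) := by ring
        _ ≤ r y ^ 2 * ((2 * x + 4) * (x * Real.log x - x + 1)) :=
            mul_le_mul_of_nonneg_left hk (sq_nonneg _)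
        _ = (2 * (r y * x) + 4 * r y) * (r y * (x * Real.log x - x + 1)) := by ring
  set u : Y → ℝ := fun y => Real.sqrt ((2 * q y + 4 * r y) / 3) with hu
  set v : Y → ℝ := fun y => Real.sqrt (a y) with hv
  have hpt : ∀ y, |q y - r y| ≤ u y * v y := by
    intro y
    have h2q : (0:ℝ) ≤ (2 * q y + 4 * r y) / 3 := by
      have := hq0 y; have := hr0 y; positivity
    rw [hu, hv, ← Real.sqrt_sq_eq_abs, ← Real.sqrt_mul h2q (a y)]
    apply Real.sqrt_le_sqrt
    rw [div_mul_eq_mul_div, le_div_iff₀ (by norm_num : (0:ℝ) < 3)]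
    linarith [hkey y]
  have hsum1 : ∑ y, u y ^ 2 = 2 := by
    have huy : ∀ y : Y, u y ^ 2 = (2 * q y + 4 * r y) / 3 := by
      intro y
      rw [hu]
      exact Real.sq_sqrt (by have := hq0 y; have := hr0 y; positivity)
    rw [Finset.sum_congr rfl fun y _ => huy y, ← Finset.sum_div,
      Finset.sum_add_distrib, ← Finset.mul_sum, ← Finset.mul_sum, hq1, hr1]
    norm_num
  have hsum2 : ∑ y, v y ^ 2 = D := by
    have hvy : ∀ y : Y, v y ^ 2 = a y := fun y => Real.sq_sqrt (ha0 y)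
    rw [Finset.sum_congr rfl fun y _ => hvy y]
    simp only [ha]
    rw [Finset.sum_add_distrib, Finset.sum_sub_distrib, hq1, hr1, ← hD]
    ring
  have hD0 : 0 ≤ D := by
    rw [← hsum2]
    exact Finset.sum_nonneg fun y _ => sq_nonneg _
  have hcs : (∑ y, u y * v y) ^ 2 ≤ 2 * D := by
    have := Finset.sum_mul_sq_le_sq_mul_sq Finset.univ u v
    rwa [hsum1, hsum2] at this
  have huv0 : 0 ≤ ∑ y, u y * v y :=
    Finset.sum_nonneg fun y _ => mul_nonneg (Real.sqrt_nonneg _) (Real.sqrt_nonneg _)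
  calc ∑ y, |q y - r y| ≤ ∑ y, u y * v y := Finset.sum_le_sum fun y _ => hpt y
    _ ≤ Real.sqrt (2 * D) := by
        rw [← Real.sqrt_sq huv0]
        exact Real.sqrt_le_sqrt hcs
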